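/- arXiv:1710.10551 — 5 statements merged into one kernel-verified Lean document; each statement's English description precedes it below -/
import Mathlib

section
/- For a centered sub-Gaussian random variable X with parameter ν² and any integer k ≥ 1, the k-th absolute moment satisfies (E|X|^k)^{1/k} ≤ e^{1/e} ν √k. -/
open MeasureTheory Real

lemma aux_pow_le_exp (k : ℕ) (hk : 1 ≤ k) (t : ℝ) (ht : 0 ≤ t) :
    t ^ k ≤ (k : ℝ) ^ k * Real.exp (t - k) := by
  have hk' : (0:ℝ) < k := by exact_mod_cast hk
  have h1 : t / k ≤ Real.exp (t / k - 1) := by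
    have := Real.add_one_le_exp (t / k - 1)
    linarith
  have h2 : t ≤ (k:ℝ) * Real.exp (t / k - 1) := by
    have : (k:ℝ) * (t / k) ≤ (k:ℝ) * Real.exp (t/k - 1) :=
      mul_le_mul_of_nonneg_left h1 hk'.le
    calc t = (k:ℝ) * (t / k) := by field_simp
    _ ≤ _ := this
  calc t ^ k ≤ ((k:ℝ) * Real.exp (t/k - 1)) ^ k := pow_le_pow_left₀ ht h2 k
  _ = (k:ℝ)^k * Real.exp (t - k) := by
      rw [mul_pow, ← Real.exp_nat_mul]
      congr 2
      field_simp

/-- For a centered sub-Gaussian random variable `X` with parameter `ν²`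
(meaning `E[exp(aX)] ≤ exp(ν²a²/2)` for all real `a`, with `E X = 0`),
for any integer `k ≥ 1` the `k`-th absolute moment satisfies
`(E|X|^k)^(1/k) ≤ e^{1/e} ν √k`. -/
theorem subGaussian_moment_bound
    {Ω : Type*} [MeasurableSpace Ω] (μ : Measure Ω) [IsProbabilityMeasure μ]
    (X : Ω → ℝ) (ν : ℝ) (hν : 0 < ν)
    (hmeas : Measurable X)
    (hcentered : ∫ ω, X ω ∂μ = 0)
    (hint : ∀ a : ℝ, Integrable (fun ω => rexp (a * X ω)) μ)
    (hsg : ∀ a : ℝ, ∫ ω, rexp (a * X ω) ∂μ ≤ rexp (ν ^ 2 * a ^ 2 / 2))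
    (k : ℕ) (hk : 1 ≤ k) :
    (∫ ω, |X ω| ^ k ∂μ) ^ ((1 : ℝ) / k) ≤ rexp (1 / exp 1) * ν * Real.sqrt k := by
  have hk' : (0:ℝ) < k := by exact_mod_cast hk
  set s : ℝ := Real.sqrt k with hs
  have hs0 : 0 < s := Real.sqrt_pos.mpr hk'
  have hs2 : s ^ 2 = k := Real.sq_sqrt hk'.le
  set lam : ℝ := s / ν with hlam
  have hlam0 : 0 < lam := div_pos hs0 hν
  set C : ℝ := s * ν / Real.exp 1 with hC
  have hC0 : 0 < C := by positivity
  -- pointwise bound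
  have hpt : ∀ x : ℝ, |x| ^ k ≤ C ^ k * (Real.exp (lam * x) + Real.exp (-lam * x)) := by
    intro x
    have h1 : (lam * |x|) ^ k ≤ (k:ℝ) ^ k * Real.exp (lam * |x| - k) :=
      aux_pow_le_exp k hk _ (by positivity)
    have hCk : C ^ k * lam ^ k * Real.exp (k:ℝ) = (k:ℝ) ^ k := by
      have : C * lam = (k:ℝ) / Real.exp 1 := by
        rw [hC, hlam]
        field_simp
        rw [← hs2]
      calc C ^ k * lam ^ k * Real.exp (k:ℝ)
          = (C * lam) ^ k * Real.exp (k:ℝ) := by ring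
        _ = ((k:ℝ) / Real.exp 1) ^ k * Real.exp (k:ℝ) := by rw [this]
        _ = (k:ℝ) ^ k / Real.exp 1 ^ k * Real.exp (k:ℝ) := by rw [div_pow]
        _ = (k:ℝ) ^ k := by
            rw [show Real.exp (k:ℝ) = Real.exp 1 ^ k by
              rw [← Real.exp_nat_mul, mul_one]]
            field_simp
    have h2 : |x| ^ k ≤ C ^ k * Real.exp (lam * |x|) := by
      have hlk : (0:ℝ) < lam ^ k := by positivity
      rw [← hCk] at h1
      have hx : (lam * |x|) ^ k = lam ^ k * |x| ^ k := mul_pow _ _ _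
      rw [hx, Real.exp_sub] at h1
      have hre : C ^ k * lam ^ k * Real.exp (k:ℝ) * (Real.exp (lam*|x|) / Real.exp (k:ℝ))
          = lam ^ k * (C ^ k * Real.exp (lam*|x|)) := by
        field_simp
      rw [hre] at h1
      exact le_of_mul_le_mul_left h1 hlk
    have h3 : Real.exp (lam * |x|) ≤ Real.exp (lam * x) + Real.exp (-lam * x) := by
      rcases abs_cases x with ⟨h,_⟩|⟨h,_⟩
      · rw [h]; nlinarith [Real.exp_pos (-lam * x)]
      · rw [h]
        have : lam * -x = -lam * x := by ring
        rw [this]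
        nlinarith [Real.exp_pos (lam * x)]
    calc |x| ^ k ≤ C ^ k * Real.exp (lam * |x|) := h2
      _ ≤ _ := by nlinarith [Real.exp_pos (lam*x), Real.exp_pos (-lam*x), pow_pos hC0 k, h3]
  -- integrability
  have hg : Integrable (fun ω => C ^ k * (Real.exp (lam * X ω) + Real.exp (-lam * X ω))) μ :=
    (((hint lam).add (hint (-lam))).const_mul _)
  have hXk : Integrable (fun ω => |X ω| ^ k) μ := by
    refine Integrable.mono hg ((hmeas.abs.pow_const k).aestronglyMeasurable) ?_
    filter_upwards with ω
    have hnn : (0:ℝ) ≤ C ^ k * (Real.exp (lam * X ω) + Real.exp (-lam * X ω)) := by positivity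
    rw [Real.norm_eq_abs, Real.norm_eq_abs, abs_of_nonneg (pow_nonneg (abs_nonneg _) k),
      abs_of_nonneg hnn]
    exact hpt (X ω)
  -- integral bound
  have hI1 : ∫ ω, |X ω| ^ k ∂μ ≤ C ^ k * (2 * Real.exp ((k:ℝ)/2)) := by
    have step1 : ∫ ω, |X ω| ^ k ∂μ ≤ ∫ ω, C ^ k * (Real.exp (lam * X ω) + Real.exp (-lam * X ω)) ∂μ :=
      integral_mono hXk hg (fun ω => hpt (X ω))
    have step2 : ∫ ω, C ^ k * (Real.exp (lam * X ω) + Real.exp (-lam * X ω)) ∂μ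
        = C ^ k * ((∫ ω, Real.exp (lam * X ω) ∂μ) + ∫ ω, Real.exp (-lam * X ω) ∂μ) := by
      rw [integral_const_mul, integral_add (hint lam) (hint (-lam))]
    have hνlam : ν ^ 2 * lam ^ 2 / 2 = (k:ℝ)/2 := by
      rw [hlam, div_pow, ← hs2]
      field_simp
    have b1 : ∫ ω, Real.exp (lam * X ω) ∂μ ≤ Real.exp ((k:ℝ)/2) := by
      have := hsg lam; rwa [hνlam] at this
    have b2 : ∫ ω, Real.exp (-lam * X ω) ∂μ ≤ Real.exp ((k:ℝ)/2) := by
      have := hsg (-lam)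
      rw [neg_pow, show ((-1:ℝ)^2) = 1 by norm_num] at this
      simp only [one_mul] at this
      rwa [hνlam] at this
    calc ∫ ω, |X ω| ^ k ∂μ ≤ _ := step1
      _ = _ := step2
      _ ≤ C ^ k * (2 * Real.exp ((k:ℝ)/2)) := by nlinarith [pow_pos hC0 k]
  -- rpow step
  have hInn : 0 ≤ ∫ ω, |X ω| ^ k ∂μ := integral_nonneg (fun ω => by positivity)
  have hR : (∫ ω, |X ω| ^ k ∂μ) ^ ((1:ℝ)/k) ≤ (C ^ k * (2 * Real.exp ((k:ℝ)/2))) ^ ((1:ℝ)/k) :=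
    Real.rpow_le_rpow hInn hI1 (by positivity)
  have hRHS : (C ^ k * (2 * Real.exp ((k:ℝ)/2))) ^ ((1:ℝ)/k)
      = C * ((2:ℝ) ^ ((1:ℝ)/k) * Real.exp (1/2)) := by
    rw [Real.mul_rpow (by positivity) (by positivity),
        Real.mul_rpow (by norm_num) (Real.exp_pos _).le]
    congr 1
    · rw [← Real.rpow_natCast C k, ← Real.rpow_mul hC0.le]
      rw [mul_one_div, div_self (by positivity), Real.rpow_one]
    · congr 1
      rw [← Real.exp_one_rpow ((k:ℝ)/2), ← Real.rpow_mul (Real.exp_pos 1).le,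
          Real.exp_one_rpow]
      congr 1
      field_simp
  rw [hRHS] at hR
  have h2k : (2:ℝ) ^ ((1:ℝ)/k) ≤ 2 := by
    have := Real.rpow_le_rpow_of_exponent_le (x := 2) (by norm_num)
        (show (1:ℝ)/k ≤ 1 by rw [div_le_one hk']; exact_mod_cast hk)
    rwa [Real.rpow_one] at this
  have hfin : C * ((2:ℝ) ^ ((1:ℝ)/k) * Real.exp (1/2)) ≤ rexp (1 / exp 1) * ν * s := by
    have key : 2 * Real.exp (1/2) ≤ Real.exp (1/Real.exp 1) * Real.exp 1 := by
      rw [← Real.exp_add]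
      have h2 : (2:ℝ) = Real.exp (Real.log 2) := (Real.exp_log (by norm_num)).symm
      have hlog : Real.log 2 < 0.6931471808 := Real.log_two_lt_d9
      have he : Real.exp 1 < 2.7182818286 := Real.exp_one_lt_d9
      have he2 : (2.7182818283:ℝ) < Real.exp 1 := Real.exp_one_gt_d9
      have hinv : (0.36:ℝ) < 1 / Real.exp 1 := by
        rw [lt_div_iff₀ (Real.exp_pos 1)]; nlinarith
      calc 2 * Real.exp (1/2) = Real.exp (Real.log 2 + 1/2) := by
            rw [Real.exp_add, ← h2]
        _ ≤ Real.exp (1/Real.exp 1 + 1) :=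
            Real.exp_le_exp.mpr (by nlinarith)
    have hCe : C * (2 * Real.exp (1/2)) ≤ s * ν / Real.exp 1 * (Real.exp (1/Real.exp 1) * Real.exp 1) := by
      rw [hC]
      exact mul_le_mul_of_nonneg_left key (by positivity)
    calc C * ((2:ℝ) ^ ((1:ℝ)/k) * Real.exp (1/2))
        ≤ C * (2 * Real.exp (1/2)) := by
          apply mul_le_mul_of_nonneg_left _ hC0.le
          exact mul_le_mul_of_nonneg_right h2k (Real.exp_pos _).le
      _ ≤ s * ν / Real.exp 1 * (Real.exp (1/Real.exp 1) * Real.exp 1) := hCe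
      _ = rexp (1 / exp 1) * ν * s := by
          field_simp
  exact hR.trans hfin
end

section
/- Let θ̂ minimize θ ↦ (1/n)‖Y − Zθ‖₂² + λ‖θ‖₁ over ℝ^p, where Y = Zθ₀ + ε. If 2‖(1/n)Zᵀε‖_∞ ≤ λ/2 (i.e., λ is at least four times the empirical correlation of noise with the design), then the error vector v = θ̂ − θ₀ satisfies the cone condition ‖v_{S^c}‖₁ ≤ 3‖v_S‖₁, where S is the support of θ₀. -/
open Finset Matrix

/-- Basic inequality / cone condition for the Lasso. Let `θ̂` minimize
`θ ↦ (1/n)‖Y − Zθ‖₂² + λ‖θ‖₁` over `ℝ^p`, where `Y = Zθ₀ + ε` and `θ₀` is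
supported on `S`. If `2‖(1/n)Zᵀε‖_∞ ≤ λ/2`, then the error `v = θ̂ − θ₀`
satisfies `‖v_{S^c}‖₁ ≤ 3‖v_S‖₁`. -/
theorem lasso_cone_condition
    {n p : ℕ} (hn : 0 < n)
    (Z : Matrix (Fin n) (Fin p) ℝ) (ε : Fin n → ℝ)
    (θ₀ θhat : Fin p → ℝ) (S : Finset (Fin p))
    (hsupp : ∀ j, θ₀ j ≠ 0 → j ∈ S)
    (lam : ℝ) (hlam : 0 < lam)
    (Y : Fin n → ℝ) (hY : Y = Z.mulVec θ₀ + ε)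
    (hmin : ∀ θ : Fin p → ℝ,
      (1 / (n : ℝ)) * ∑ i, (Y i - Z.mulVec θhat i) ^ 2 + lam * ∑ j, |θhat j| ≤
        (1 / (n : ℝ)) * ∑ i, (Y i - Z.mulVec θ i) ^ 2 + lam * ∑ j, |θ j|)
    (hnoise : ∀ j, 2 * |(1 / (n : ℝ)) * ∑ i, Z i j * ε i| ≤ lam / 2) :
    ∑ j ∈ Sᶜ, |θhat j - θ₀ j| ≤ 3 * ∑ j ∈ S, |θhat j - θ₀ j| := by
  set v : Fin p → ℝ := fun j => θhat j - θ₀ j with hv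
  have hn' : (0:ℝ) < (1 / (n:ℝ)) := by positivity
  -- notation
  set c : Fin p → ℝ := fun j => ∑ i, Z i j * ε i with hc
  set A : ℝ := ∑ j ∈ S, |v j| with hA
  set B : ℝ := ∑ j ∈ Sᶜ, |v j| with hB
  have h1 := hmin θ₀
  subst hY
  -- residuals
  have hres1 : ∀ i, (Z.mulVec θ₀ + ε) i - Z.mulVec θ₀ i = ε i := by
    intro i; simp
  have hres2 : ∀ i, (Z.mulVec θ₀ + ε) i - Z.mulVec θhat i = ε i - Z.mulVec v i := by
    intro i
    have : Z.mulVec v i = Z.mulVec θhat i - Z.mulVec θ₀ i := by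
      have : v = θhat - θ₀ := rfl
      rw [this, Matrix.mulVec_sub]; simp
    rw [this]; simp [Pi.add_apply]; ring
  -- expand the square
  have hexp : ∑ i, ((Z.mulVec θ₀ + ε) i - Z.mulVec θhat i) ^ 2 =
      ∑ i, (ε i)^2 - 2 * ∑ i, ε i * Z.mulVec v i + ∑ i, (Z.mulVec v i)^2 := by
    rw [show ∑ i, ((Z.mulVec θ₀ + ε) i - Z.mulVec θhat i) ^ 2
        = ∑ i, ((ε i)^2 - 2 * (ε i * Z.mulVec v i) + (Z.mulVec v i)^2) from
      Finset.sum_congr rfl (fun i _ => by rw [hres2 i]; ring)]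
    rw [Finset.sum_add_distrib, Finset.sum_sub_distrib, ← Finset.mul_sum]
  have hexp1 : ∑ i, ((Z.mulVec θ₀ + ε) i - Z.mulVec θ₀ i) ^ 2 = ∑ i, (ε i)^2 :=
    Finset.sum_congr rfl (fun i _ => by rw [hres1 i])
  -- cross term
  have hcross : ∑ i, ε i * Z.mulVec v i = ∑ j, c j * v j := by
    simp only [Matrix.mulVec, dotProduct, Finset.mul_sum, hc]
    rw [Finset.sum_comm]
    exact Finset.sum_congr rfl fun j _ => by rw [Finset.sum_mul]; exact Finset.sum_congr rfl fun i _ => by ring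
  -- bound on cross term
  have hCbound : (1 / (n:ℝ)) * (2 * ∑ j, c j * v j) ≤ (lam / 2) * ∑ j, |v j| := by
    rw [Finset.mul_sum, Finset.mul_sum, Finset.mul_sum]
    refine Finset.sum_le_sum fun j _ => ?_
    have hnj := hnoise j
    calc (1 / (n:ℝ)) * (2 * (c j * v j)) ≤ |(1 / (n:ℝ)) * (2 * (c j * v j))| := le_abs_self _
      _ = (2 * |(1 / (n:ℝ)) * c j|) * |v j| := by
          rw [abs_mul, abs_mul, abs_mul, abs_mul]
          rw [abs_of_nonneg (le_of_lt hn'), abs_of_nonneg (by norm_num : (0:ℝ) ≤ 2)]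
          ring
      _ ≤ (lam / 2) * |v j| := mul_le_mul_of_nonneg_right hnj (abs_nonneg _)
  -- ℓ¹ decompositions
  have hsplitv : ∑ j, |v j| = A + B := by
    rw [hA, hB, Finset.sum_add_sum_compl S]
  have hθ0zero : ∀ j ∈ Sᶜ, θ₀ j = 0 := by
    intro j hj
    by_contra h
    exact (Finset.mem_compl.mp hj) (hsupp j h)
  have hθ0sum : ∑ j, |θ₀ j| = ∑ j ∈ S, |θ₀ j| := by
    rw [← Finset.sum_add_sum_compl S fun j => |θ₀ j|]
    have : ∑ j ∈ Sᶜ, |θ₀ j| = 0 :=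
      Finset.sum_eq_zero fun j hj => by rw [hθ0zero j hj, abs_zero]
    rw [this, add_zero]
  have hθhatsum : ∑ j, |θhat j| = ∑ j ∈ S, |θhat j| + B := by
    rw [← Finset.sum_add_sum_compl S fun j => |θhat j|]
    congr 1
    exact Finset.sum_congr rfl fun j hj => by
      simp [hv, hθ0zero j hj]
  have htri : ∑ j ∈ S, |θ₀ j| ≤ ∑ j ∈ S, |θhat j| + A := by
    rw [hA, ← Finset.sum_add_distrib]
    refine Finset.sum_le_sum fun j _ => ?_
    have : θ₀ j = θhat j - v j := by simp [hv]
    rw [this]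
    exact (abs_sub _ _)
  have hQ : (0:ℝ) ≤ ∑ i, (Z.mulVec v i)^2 :=
    Finset.sum_nonneg fun i _ => sq_nonneg _
  -- combine
  rw [hexp, hexp1, hθ0sum, hθhatsum] at h1
  rw [hcross] at h1
  have key : lam * B ≤ (lam / 2) * (A + B) + lam * A := by
    nlinarith [hCbound, hsplitv, htri, mul_pos hn' (lt_of_lt_of_le (by linarith : (0:ℝ) < 0 + 1) (by linarith [hQ] : (0:ℝ)+1 ≤ 1 + ∑ i, (Z.mulVec v i)^2))]
  have : B ≤ 3 * A := by nlinarith [key]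
  simpa [hA, hB, hv] using this
end

section
/- Suppose f : ℝ^d → ℝ is convex and differentiable, x* minimizes f over a convex set 𝒳̃, and x̃ minimizes f over the subset {x ∈ 𝒳̃ : x_{Ŝ^c} = 0} for some index set Ŝ. Suppose x* is supported on a set S ⊇ Ŝ, and ‖[∇f(x̃)]_{S∖Ŝ}‖_∞ ≤ 2η. If x* restricted to Ŝ lies in 𝒳̃, then f(x̃) − f(x*) ≤ ∇f(x̃)ᵀ(x̃ − x*) ≤ 2η‖x*‖₁. -/
open Finset

lemma line_deriv_aux {d : ℕ} (f : EuclideanSpace ℝ (Fin d) → ℝ)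
    (g x v : EuclideanSpace ℝ (Fin d)) (h : HasGradientAt f g x) :
    HasDerivAt (fun t : ℝ => f (x + t • v)) (inner ℝ g v : ℝ) 0 := by
  have hf := h.hasFDerivAt
  have hline : HasDerivAt (fun t : ℝ => x + t • v) v 0 := by
    simpa using ((hasDerivAt_id (0:ℝ)).smul_const v).const_add x
  have hx0 : x + (0:ℝ) • v = x := by simp
  rw [← hx0] at hf
  have := hf.comp_hasDerivAt (0:ℝ) hline
  simp [InnerProductSpace.toDual_apply_apply] at this
  exact this

lemma deriv_ge_aux {φ : ℝ → ℝ} {D m : ℝ} (hD : HasDerivAt φ D 0)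
    (h : ∀ t ∈ Set.Ioc (0:ℝ) 1, m * t ≤ φ t - φ 0) : m ≤ D := by
  have hs := hasDerivAt_iff_tendsto_slope.mp hD
  have hs' : Filter.Tendsto (slope φ 0) (nhdsWithin 0 (Set.Ioi 0)) (nhds D) :=
    hs.mono_left (nhdsWithin_mono _ (by intro t ht; exact ne_of_gt ht))
  refine ge_of_tendsto hs' ?_
  filter_upwards [Ioc_mem_nhdsGT_of_mem (by norm_num : (0:ℝ) ∈ Set.Ico (0:ℝ) 1)] with t ht
  have ht0 : (0:ℝ) < t := ht.1
  have h2 := h t ht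
  rw [slope_def_field]
  rw [le_div_iff₀ (by simpa using ht0)]
  nlinarith

/-- Restricted-minimizer comparison. Let `f` be convex and differentiable,
`x*` a minimizer of `f` over a convex set `𝒳̃` supported on `S ⊇ Ŝ`, and `x̃` a
minimizer of `f` over `{x ∈ 𝒳̃ : x_{Ŝᶜ} = 0}`. If
`‖[∇f(x̃)]_{S∖Ŝ}‖_∞ ≤ 2η` and the restriction of `x*` to `Ŝ` lies in `𝒳̃`, then
`f(x̃) − f(x*) ≤ ∇f(x̃)ᵀ(x̃ − x*) ≤ 2η‖x*‖₁`. -/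
theorem restricted_minimizer_gap_bound
    {d : ℕ} (f : EuclideanSpace ℝ (Fin d) → ℝ)
    (Xt : Set (EuclideanSpace ℝ (Fin d))) (hXt : Convex ℝ Xt)
    (hconv : ConvexOn ℝ Set.univ f)
    (gradf : EuclideanSpace ℝ (Fin d) → EuclideanSpace ℝ (Fin d))
    (hdiff : ∀ x, HasGradientAt f (gradf x) x)
    (S Shat : Finset (Fin d)) (hSS : Shat ⊆ S)
    (xstar xt : EuclideanSpace ℝ (Fin d))
    (hxstar_mem : xstar ∈ Xt)
    (hxstar_min : ∀ x ∈ Xt, f xstar ≤ f x)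
    (hxstar_supp : ∀ i ∉ S, xstar i = 0)
    (hxt_mem : xt ∈ Xt) (hxt_supp : ∀ i ∉ Shat, xt i = 0)
    (hxt_min : ∀ x ∈ Xt, (∀ i ∉ Shat, x i = 0) → f xt ≤ f x)
    (η : ℝ) (hη : 0 < η)
    (hgrad_small : ∀ i ∈ S \ Shat, |gradf xt i| ≤ 2 * η)
    (xstar' : EuclideanSpace ℝ (Fin d))
    (hxstar' : ∀ i, xstar' i = if i ∈ Shat then xstar i else 0)
    (hxstar'_mem : xstar' ∈ Xt) :
    f xt - f xstar ≤ ∑ i, gradf xt i * (xt i - xstar i) ∧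
      ∑ i, gradf xt i * (xt i - xstar i) ≤ 2 * η * ∑ i, |xstar i| := by
  set g := gradf xt with hg
  have hsum : ∀ v : EuclideanSpace ℝ (Fin d), (inner ℝ g v : ℝ) = ∑ i, g i * v i := by
    intro v
    simp [PiLp.inner_apply, RCLike.inner_apply, mul_comm]
  -- Part 1: convexity gradient inequality
  have key1 : f xt - f xstar ≤ (inner ℝ g (xt - xstar) : ℝ) := by
    have hder := line_deriv_aux f g xt (xstar - xt) (hdiff xt)
    have hder' : HasDerivAt (fun t : ℝ => -f (xt + t • (xstar - xt)))
        (-(inner ℝ g (xstar - xt) : ℝ)) 0 := hder.neg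
    have hb : f xt - f xstar ≤ -(inner ℝ g (xstar - xt) : ℝ) := by
      refine deriv_ge_aux hder' ?_
      intro t ht
      have hconv' := hconv.2 (Set.mem_univ xt) (Set.mem_univ xstar)
        (by linarith [ht.2] : (0:ℝ) ≤ 1 - t) (le_of_lt ht.1) (by ring)
      have heq : xt + t • (xstar - xt) = (1 - t) • xt + t • xstar := by module
      rw [heq]
      simp only [zero_smul, add_zero, smul_eq_mul] at hconv' ⊢
      nlinarith [hconv']
    have : (inner ℝ g (xt - xstar) : ℝ) = -(inner ℝ g (xstar - xt) : ℝ) := by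
      rw [← inner_neg_right, neg_sub]
    linarith [this ▸ hb]
  -- Part 2: first-order optimality of xt over the restricted set
  have key2 : (0:ℝ) ≤ (inner ℝ g (xstar' - xt) : ℝ) := by
    have hder := line_deriv_aux f g xt (xstar' - xt) (hdiff xt)
    refine deriv_ge_aux hder ?_
    intro t ht
    set y := xt + t • (xstar' - xt) with hy
    have heq : y = (1 - t) • xt + t • xstar' := by rw [hy]; module
    have hymem : y ∈ Xt := by
      rw [heq]
      exact hXt hxt_mem hxstar'_mem (by linarith [ht.2]) (le_of_lt ht.1) (by ring)
    have hysupp : ∀ i ∉ Shat, y i = 0 := by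
      intro i hi
      have h1 : xt i = 0 := hxt_supp i hi
      have h2 : xstar' i = 0 := by rw [hxstar' i, if_neg hi]
      simp [hy, h1, h2]
    have := hxt_min y hymem hysupp
    simp only [zero_mul, zero_smul, add_zero]
    linarith
  constructor
  · calc f xt - f xstar ≤ (inner ℝ g (xt - xstar) : ℝ) := key1
      _ = ∑ i, g i * (xt i - xstar i) := by
          rw [hsum]; exact Finset.sum_congr rfl (fun i _ => by simp [PiLp.sub_apply])
  · have hsplit : ∑ i, g i * (xt i - xstar i)
        = (∑ i, g i * (xt i - xstar' i)) + ∑ i, g i * (xstar' i - xstar i) := by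
      rw [← Finset.sum_add_distrib]
      exact Finset.sum_congr rfl (fun i _ => by ring)
    have h1 : (∑ i, g i * (xt i - xstar' i)) ≤ 0 := by
      have : (inner ℝ g (xt - xstar') : ℝ) = -(inner ℝ g (xstar' - xt) : ℝ) := by
        rw [← inner_neg_right, neg_sub]
      have h2 : (inner ℝ g (xt - xstar') : ℝ) = ∑ i, g i * (xt i - xstar' i) := by
        rw [hsum]; exact Finset.sum_congr rfl (fun i _ => by simp [PiLp.sub_apply])
      linarith [h2 ▸ (this ▸ (neg_nonpos_of_nonneg key2))]
    have h2 : (∑ i, g i * (xstar' i - xstar i)) ≤ ∑ i, 2 * η * |xstar i| := by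
      refine Finset.sum_le_sum (fun i _ => ?_)
      by_cases hi : i ∈ Shat
      · rw [hxstar' i, if_pos hi]
        simp
        positivity
      · rw [hxstar' i, if_neg hi]
        by_cases hiS : i ∈ S
        · have habs : |g i| ≤ 2 * η := hgrad_small i (Finset.mem_sdiff.mpr ⟨hiS, hi⟩)
          calc g i * (0 - xstar i) ≤ |g i * (0 - xstar i)| := le_abs_self _
            _ = |g i| * |xstar i| := by rw [abs_mul]; simp
            _ ≤ 2 * η * |xstar i| := mul_le_mul_of_nonneg_right habs (abs_nonneg _)
        · rw [hxstar_supp i hiS]; simp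
    calc ∑ i, g i * (xt i - xstar i)
        ≤ ∑ i, 2 * η * |xstar i| := by rw [hsplit]; linarith
      _ = 2 * η * ∑ i, |xstar i| := by rw [Finset.mul_sum]
end

section
/- Let ‖·‖_ψ be a norm with dual norm ‖·‖_{ψ*}, Δ_ψ a Bregman divergence that is κ-strongly convex with respect to ‖·‖_ψ, and f convex and H̃-smooth with respect to ‖·‖_ψ (i.e., f(y) ≤ f(x) + ⟨∇f(x), y−x⟩ + (H̃/2)‖x−y‖_ψ² for all x, y). Let η < κ/H̃ and let x_{t+1} = argmin_{x ∈ 𝒳̃} {η⟨g̃_t, x − x_t⟩ + Δ_ψ(x, x_t)} for an arbitrary vector g̃_t. Then for every x* ∈ 𝒳̃, with g_t = ∇f(x_t): η[f(x_{t+1}) − f(x*)] + Δ_ψ(x_{t+1}, x*) ≤ Δ_ψ(x_t, x*) + η⟨g̃_t − g_t, x* − x_t⟩ + η²‖g̃_t − g_t‖_{ψ*}²/(2(κ − H̃η)). -/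
open Finset InnerProductSpace
open Set Filter Topology

def NSpace (d : ℕ) : Type := EuclideanSpace ℝ (Fin d)

lemma norm_lower_bound {d : ℕ} (N : EuclideanSpace ℝ (Fin d) → ℝ)
    (hN_homog : ∀ (c : ℝ) (x), N (c • x) = |c| * N x)
    (hN_tri : ∀ x y, N (x + y) ≤ N x + N y)
    (hN_def : ∀ x, N x = 0 → x = 0) :
    ∃ c > (0:ℝ), ∀ x, c * ‖x‖ ≤ N x := by
  letI : AddCommGroup (NSpace d) := (inferInstanceAs (AddCommGroup (EuclideanSpace ℝ (Fin d))))
  letI : Module ℝ (NSpace d) := (inferInstanceAs (Module ℝ (EuclideanSpace ℝ (Fin d))))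
  have hzero : N 0 = 0 := by simpa using hN_homog 0 0
  letI : NormedAddCommGroup (NSpace d) := AddGroupNorm.toNormedAddCommGroup
    { toFun := N
      map_zero' := hzero
      add_le' := hN_tri
      neg' := fun x => by
        have h := hN_homog (-1) x
        rw [abs_neg, abs_one, one_mul] at h
        rw [← h]; congr 1; exact (neg_one_smul ℝ x).symm
      eq_zero_of_map_eq_zero' := hN_def }
  letI : NormedSpace ℝ (NSpace d) :=
    { norm_smul_le := fun c x => le_of_eq (hN_homog c x) }
  haveI : FiniteDimensional ℝ (NSpace d) :=
    (inferInstanceAs (FiniteDimensional ℝ (EuclideanSpace ℝ (Fin d))))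
  let L : NSpace d →ₗ[ℝ] EuclideanSpace ℝ (Fin d) :=
    { toFun := fun x => x
      map_add' := fun _ _ => rfl
      map_smul' := fun _ _ => rfl }
  let Lc : NSpace d →L[ℝ] EuclideanSpace ℝ (Fin d) := LinearMap.toContinuousLinearMap L
  refine ⟨(‖Lc‖ + 1)⁻¹, by positivity, fun x => ?_⟩
  have h1 : ‖x‖ ≤ ‖Lc‖ * N x := Lc.le_opNorm x
  have h2 : (0:ℝ) ≤ N x := by
    have t1 := hN_tri x (-x)
    have t2 : N (-x) = N x := by simpa using hN_homog (-1) x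
    have t3 : x + -x = 0 := by abel
    rw [t3, hzero, t2] at t1; linarith
  have h3 : ‖x‖ ≤ (‖Lc‖ + 1) * N x := by nlinarith
  rw [inv_mul_le_iff₀ (by positivity)]
  linarith

lemma dual_pair_le {d : ℕ} (N : EuclideanSpace ℝ (Fin d) → ℝ)
    (hN_pos : ∀ x, 0 ≤ N x)
    (hN_homog : ∀ (c : ℝ) (x), N (c • x) = |c| * N x)
    (hN_tri : ∀ x y, N (x + y) ≤ N x + N y)
    (hN_def : ∀ x, N x = 0 → x = 0)
    (Nstar : EuclideanSpace ℝ (Fin d) → ℝ)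
    (hNstar : ∀ z, Nstar z = sSup ((fun x => ⟪z, x⟫_ℝ) '' {x | N x ≤ 1}))
    (z v : EuclideanSpace ℝ (Fin d)) : ⟪z, v⟫_ℝ ≤ Nstar z * N v := by
  obtain ⟨c, hc, hcle⟩ := norm_lower_bound N hN_homog hN_tri hN_def
  have hbdd : BddAbove ((fun x => ⟪z, x⟫_ℝ) '' {x | N x ≤ 1}) := by
    refine ⟨‖z‖ * c⁻¹, fun y hy => ?_⟩
    obtain ⟨x, hx, rfl⟩ := hy
    have h1 : ⟪z, x⟫_ℝ ≤ ‖z‖ * ‖x‖ := real_inner_le_norm z x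
    have h2 : c * ‖x‖ ≤ N x := hcle x
    have h3 : ‖x‖ ≤ c⁻¹ := by
      have h4 := mul_le_mul_of_nonneg_left (le_trans h2 hx) (le_of_lt (inv_pos.2 hc))
      calc ‖x‖ = c⁻¹ * (c * ‖x‖) := by field_simp
        _ ≤ c⁻¹ * 1 := h4
        _ = c⁻¹ := mul_one _
    calc ⟪z, x⟫_ℝ ≤ ‖z‖ * ‖x‖ := h1
      _ ≤ ‖z‖ * c⁻¹ := by nlinarith [norm_nonneg z]
  by_cases hv : v = 0
  · simp [hv]
    have : (0:ℝ) ≤ Nstar z * N 0 := by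
      have hz0 : N 0 = 0 := by simpa using hN_homog 0 0
      simp [hz0]
    simpa using this
  · have hNv : 0 < N v := lt_of_le_of_ne (hN_pos v) (fun h => hv (hN_def v h.symm))
    have hu : N ((N v)⁻¹ • v) ≤ 1 := by
      rw [hN_homog, abs_of_pos (by positivity), inv_mul_cancel₀ (ne_of_gt hNv)]
    have hmem : ⟪z, (N v)⁻¹ • v⟫_ℝ ∈ (fun x => ⟪z, x⟫_ℝ) '' {x | N x ≤ 1} :=
      ⟨(N v)⁻¹ • v, hu, rfl⟩
    have hle : ⟪z, (N v)⁻¹ • v⟫_ℝ ≤ Nstar z := by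
      rw [hNstar]; exact le_csSup hbdd hmem
    rw [real_inner_smul_right] at hle
    calc ⟪z, v⟫_ℝ = N v * ((N v)⁻¹ * ⟪z, v⟫_ℝ) := by field_simp
      _ ≤ N v * Nstar z := by nlinarith
      _ = Nstar z * N v := mul_comm _ _

lemma deriv_le_of_slope (q : ℝ → ℝ) (q' c : ℝ) (hq : HasDerivAt q q' 0)
    (h : ∀ t ∈ Set.Ioc (0:ℝ) 1, q t - q 0 ≤ t * c) : q' ≤ c := by
  have hslope : Tendsto (slope q 0) (𝓝[>] 0) (𝓝 q') :=
    (hasDerivAt_iff_tendsto_slope.1 hq).mono_left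
      (nhdsWithin_mono 0 (fun t ht => ne_of_gt ht))
  refine le_of_tendsto hslope ?_
  filter_upwards [Ioc_mem_nhdsGT (by norm_num : (0:ℝ) < 1)] with t ht
  have ht0 : 0 < t := ht.1
  rw [slope_def_field]
  have := h t ht
  rw [sub_zero, div_le_iff₀ ht0]
  linarith

lemma curve_hasDerivAt {d : ℕ} (F : EuclideanSpace ℝ (Fin d) → ℝ)
    (G x v : EuclideanSpace ℝ (Fin d)) (hF : HasGradientAt F G x) :
    HasDerivAt (fun t : ℝ => F (x + t • v)) ⟪G, v⟫_ℝ 0 := by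
  have hγ : HasDerivAt (fun t : ℝ => x + t • v) v 0 := by
    simpa using ((hasDerivAt_id (0:ℝ)).smul_const v).const_add x
  have hF' : HasFDerivAt F ((toDual ℝ (EuclideanSpace ℝ (Fin d))) G) ((0:ℝ) • v + x) := by
    simpa using hF.hasFDerivAt
  have hγ' : HasDerivAt (fun t : ℝ => t • v + x) v 0 := by
    simpa using ((hasDerivAt_id (0:ℝ)).smul_const v).add_const x
  have := hF'.comp_hasDerivAt 0 hγ'
  simp only [Function.comp_def, add_comm] at this
  exact this

/-- One-step mirror descent inequality with inexact gradients (Lan 2012,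
Lemma 3). `N` is a norm on `ℝ^d` with dual norm `Nstar`, `Δψ` is a Bregman
divergence that is `κ`-strongly convex w.r.t. `N`, `f` is convex and
`H̃`-smooth w.r.t. `N`, `η < κ/H̃`, and `x₁` is the mirror descent update from
`x_t` with an arbitrary gradient estimate `g̃_t`. Then for every `x* ∈ 𝒳̃`:
`η[f(x₁) − f(x*)] + Δψ(x₁, x*) ≤ Δψ(x_t, x*) + η⟨g̃_t − g_t, x* − x_t⟩
  + η²‖g̃_t − g_t‖_{ψ*}²/(2(κ − H̃η))`. -/
theorem mirror_descent_one_step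
    {d : ℕ} (N : EuclideanSpace ℝ (Fin d) → ℝ)
    (hN_pos : ∀ x, 0 ≤ N x)
    (hN_homog : ∀ (c : ℝ) (x), N (c • x) = |c| * N x)
    (hN_tri : ∀ x y, N (x + y) ≤ N x + N y)
    (hN_def : ∀ x, N x = 0 → x = 0)
    (Nstar : EuclideanSpace ℝ (Fin d) → ℝ)
    (hNstar : ∀ z, Nstar z = sSup ((fun x => ⟪z, x⟫_ℝ) '' {x | N x ≤ 1}))
    (ψ : EuclideanSpace ℝ (Fin d) → ℝ)
    (gradψ : EuclideanSpace ℝ (Fin d) → EuclideanSpace ℝ (Fin d))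
    (hψdiff : ∀ x, HasGradientAt ψ (gradψ x) x)
    (hψconv : StrictConvexOn ℝ Set.univ ψ)
    (Δψ : EuclideanSpace ℝ (Fin d) → EuclideanSpace ℝ (Fin d) → ℝ)
    (hΔψ : ∀ x y, Δψ x y = ψ y - ψ x - ⟪gradψ x, y - x⟫_ℝ)
    (κ : ℝ) (hκ : 0 < κ)
    (hsc : ∀ x y, Δψ x y ≥ κ / 2 * (N (x - y)) ^ 2)
    (f : EuclideanSpace ℝ (Fin d) → ℝ)
    (hfconv : ConvexOn ℝ Set.univ f)
    (gradf : EuclideanSpace ℝ (Fin d) → EuclideanSpace ℝ (Fin d))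
    (hfdiff : ∀ x, HasGradientAt f (gradf x) x)
    (Ht : ℝ) (hHt : 0 < Ht)
    (hsmooth : ∀ x y, f y ≤ f x + ⟪gradf x, y - x⟫_ℝ + Ht / 2 * (N (x - y)) ^ 2)
    (η : ℝ) (hη : 0 < η) (hηκ : η < κ / Ht)
    (Xt : Set (EuclideanSpace ℝ (Fin d))) (hXt : Convex ℝ Xt)
    (hXtc : IsClosed Xt)
    (xt gt' x1 : EuclideanSpace ℝ (Fin d)) (hxt : xt ∈ Xt)
    (hx1 : x1 ∈ Xt)
    (hx1min : ∀ x ∈ Xt,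
      η * ⟪gt', x1 - xt⟫_ℝ + Δψ xt x1 ≤ η * ⟪gt', x - xt⟫_ℝ + Δψ xt x) :
    ∀ xstar ∈ Xt,
      η * (f x1 - f xstar) + Δψ x1 xstar ≤
        Δψ xt xstar + η * ⟪gt' - gradf xt, xstar - xt⟫_ℝ +
          η ^ 2 * (Nstar (gt' - gradf xt)) ^ 2 / (2 * (κ - Ht * η)) := by
  intro xstar hxstar
  have hs : 0 < κ - Ht * η := by
    have := (lt_div_iff₀ hHt).1 hηκ
    nlinarith
  -- Step 1: convexity of f gives the gradient inequality
  have S1 : ⟪gradf xt, xstar - xt⟫_ℝ ≤ f xstar - f xt := by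
    refine deriv_le_of_slope (fun t => f (xt + t • (xstar - xt))) _ _
      (curve_hasDerivAt f (gradf xt) xt (xstar - xt) (hfdiff xt)) ?_
    intro t ht
    have heq : xt + t • (xstar - xt) = (1 - t) • xt + t • xstar := by module
    have hcomb := hfconv.2 (Set.mem_univ xt) (Set.mem_univ xstar)
      (by linarith [ht.2] : (0:ℝ) ≤ 1 - t) ht.1.le (by ring)
    simp only [zero_smul, add_zero, heq]
    simp only [smul_eq_mul] at hcomb
    nlinarith [hcomb]
  -- Step 2: variational inequality at the minimizer x1
  set w : EuclideanSpace ℝ (Fin d) := xstar - x1 with hw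
  have hA : HasDerivAt (fun t : ℝ => ⟪gt', x1 - xt⟫_ℝ + t * ⟪gt', w⟫_ℝ) ⟪gt', w⟫_ℝ 0 := by
    simpa using ((hasDerivAt_id (0:ℝ)).mul_const ⟪gt', w⟫_ℝ).const_add ⟪gt', x1 - xt⟫_ℝ
  have hC : HasDerivAt (fun t : ℝ => ⟪gradψ xt, x1 - xt⟫_ℝ + t * ⟪gradψ xt, w⟫_ℝ)
      ⟪gradψ xt, w⟫_ℝ 0 := by
    simpa using ((hasDerivAt_id (0:ℝ)).mul_const ⟪gradψ xt, w⟫_ℝ).const_add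
      ⟪gradψ xt, x1 - xt⟫_ℝ
  have hB := curve_hasDerivAt ψ (gradψ x1) x1 w (hψdiff x1)
  set q : ℝ → ℝ := fun t => η * (⟪gt', x1 - xt⟫_ℝ + t * ⟪gt', w⟫_ℝ) +
    (ψ (x1 + t • w) - ψ xt - (⟪gradψ xt, x1 - xt⟫_ℝ + t * ⟪gradψ xt, w⟫_ℝ)) with hq
  have hqd : HasDerivAt q (η * ⟪gt', w⟫_ℝ + (⟪gradψ x1, w⟫_ℝ - ⟪gradψ xt, w⟫_ℝ)) 0 :=
    (hA.const_mul η).add ((hB.sub_const (ψ xt)).sub hC)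
  have qe : ∀ t : ℝ, q t = η * ⟪gt', (x1 + t • w) - xt⟫_ℝ + Δψ xt (x1 + t • w) := by
    intro t
    simp only [hq, hΔψ, inner_sub_right, inner_add_right, real_inner_smul_right]
    ring
  have S2 : 0 ≤ η * ⟪gt', w⟫_ℝ + (⟪gradψ x1, w⟫_ℝ - ⟪gradψ xt, w⟫_ℝ) := by
    have hd := deriv_le_of_slope (fun t => - q t) _ 0 hqd.neg ?_
    · linarith
    intro t ht
    have hmem : x1 + t • w ∈ Xt := by
      have heq : x1 + t • w = (1 - t) • x1 + t • xstar := by rw [hw]; module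
      rw [heq]
      exact hXt hx1 hxstar (by linarith [ht.2]) ht.1.le (by ring)
    have h0 : q 0 = η * ⟪gt', x1 - xt⟫_ℝ + Δψ xt x1 := by
      have := qe 0; simpa using this
    have hT : q t = η * ⟪gt', (x1 + t • w) - xt⟫_ℝ + Δψ xt (x1 + t • w) := qe t
    have := hx1min (x1 + t • w) hmem
    simp only [h0, hT]
    nlinarith [this]
  -- three-point identity
  have htp : Δψ xt xstar - Δψ xt x1 - Δψ x1 xstar
      = ⟪gradψ x1, w⟫_ℝ - ⟪gradψ xt, w⟫_ℝ := by
    simp only [hΔψ, hw, inner_sub_right]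
    ring
  have hKey : 0 ≤ η * ⟪gt', w⟫_ℝ + (Δψ xt xstar - Δψ xt x1 - Δψ x1 xstar) := by
    rw [htp]; exact S2
  -- smoothness
  have S4 : f x1 ≤ f xt + ⟪gradf xt, x1 - xt⟫_ℝ + Ht / 2 * (N (xt - x1)) ^ 2 :=
    hsmooth xt x1
  -- duality and Young's inequality
  have S5 : ⟪gt' - gradf xt, xt - x1⟫_ℝ ≤ Nstar (gt' - gradf xt) * N (xt - x1) :=
    dual_pair_le N hN_pos hN_homog hN_tri hN_def Nstar hNstar _ _
  have S6 : η * (Nstar (gt' - gradf xt) * N (xt - x1)) ≤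
      η ^ 2 * (Nstar (gt' - gradf xt)) ^ 2 / (2 * (κ - Ht * η)) +
        (κ - Ht * η) / 2 * (N (xt - x1)) ^ 2 := by
    have h2s : (0:ℝ) < 2 * (κ - Ht * η) := by linarith
    have hdiv : η ^ 2 * (Nstar (gt' - gradf xt)) ^ 2 / (2 * (κ - Ht * η)) * (2 * (κ - Ht * η))
        = η ^ 2 * (Nstar (gt' - gradf xt)) ^ 2 := div_mul_cancel₀ _ (ne_of_gt h2s)
    nlinarith [sq_nonneg (η * Nstar (gt' - gradf xt) - (κ - Ht * η) * N (xt - x1)), h2s, hdiv]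
  have hsc' := hsc xt x1
  -- scaled versions
  have S1' : η * ⟪gradf xt, xstar - xt⟫_ℝ ≤ η * (f xstar - f xt) :=
    mul_le_mul_of_nonneg_left S1 hη.le
  have S4' : η * f x1 ≤ η * (f xt + ⟪gradf xt, x1 - xt⟫_ℝ + Ht / 2 * (N (xt - x1)) ^ 2) :=
    mul_le_mul_of_nonneg_left S4 hη.le
  have S5' : η * ⟪gt' - gradf xt, xt - x1⟫_ℝ ≤ η * (Nstar (gt' - gradf xt) * N (xt - x1)) :=
    mul_le_mul_of_nonneg_left S5 hη.le
  have hexp : η * ⟪gt', w⟫_ℝ = η * ⟪gt' - gradf xt, xstar - xt⟫_ℝ +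
      η * ⟪gt' - gradf xt, xt - x1⟫_ℝ + η * ⟪gradf xt, xstar - xt⟫_ℝ -
      η * ⟪gradf xt, x1 - xt⟫_ℝ := by
    simp only [hw, inner_sub_left, inner_sub_right]
    ring
  nlinarith [hKey, hexp, S1', S4', S5', S6, hsc']
end

section
/- Martingale Bernstein inequality: let X₁,…,X_n be random variables with E[X_j | X₁,…,X_{j−1}] = 0, E[X_j² | X₁,…,X_{j−1}] ≤ σ², and E[|X_j|^k | X₁,…,X_{j−1}] ≤ (1/2)k!σ²b^{k−2} for all integers k ≥ 3. Then for all t > 0, P(|Σ_{j=1}^n X_j| ≥ t) ≤ 2 exp(−t²/(2(nσ² + bt))). -/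
open MeasureTheory Real Finset
open scoped ENNReal

namespace MartBern
variable {Ω : Type*} [m0 : MeasurableSpace Ω] {μ : Measure Ω}

lemma pullout_le [IsProbabilityMeasure μ] {m : MeasurableSpace Ω} (hm : m ≤ m0)
    {Y g : Ω → ℝ} (hY : StronglyMeasurable[m] Y) (hYnn : ∀ ω, 0 ≤ Y ω)
    (hYint : Integrable Y μ) (hg : Measurable[m0] g) (hgnn : ∀ ω, 0 ≤ g ω)
    (hgint : Integrable g μ) {c : ℝ}
    (hcond : ∀ᵐ ω ∂μ, (μ[g|m]) ω ≤ c) :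
    Integrable (fun ω => Y ω * g ω) μ ∧ ∫ ω, Y ω * g ω ∂μ ≤ c * ∫ ω, Y ω ∂μ := by
  haveI : SigmaFinite (μ.trim hm) := by infer_instance
  have hc : 0 ≤ c := by
    have h0 : ∀ᵐ ω ∂μ, 0 ≤ (μ[g|m]) ω :=
      condExp_nonneg (Filter.Eventually.of_forall hgnn)
    obtain ⟨ω, h1, h2⟩ := ((h0.and hcond).exists)
    exact h1.trans h2
  have hYm0 : Measurable[m0] Y := (hY.mono hm).measurable
  have hYInn : 0 ≤ ∫ ω, Y ω ∂μ := integral_nonneg hYnn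
  -- truncated versions
  set YN : ℕ → Ω → ℝ := fun N ω => min (Y ω) N with hYN
  have hYNm : ∀ N, StronglyMeasurable[m] (YN N) :=
    fun N => hY.inf stronglyMeasurable_const
  have hYNnn : ∀ N ω, 0 ≤ YN N ω := fun N ω => le_min (hYnn ω) (Nat.cast_nonneg N)
  have hYNbd : ∀ N ω, ‖YN N ω‖ ≤ (N : ℝ) := by
    intro N ω
    rw [Real.norm_eq_abs, abs_of_nonneg (hYNnn N ω)]
    exact min_le_right _ _
  have hYNg_int : ∀ N, Integrable (fun ω => YN N ω * g ω) μ := by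
    intro N
    exact hgint.bdd_mul ((hYNm N).mono hm).aestronglyMeasurable (Filter.Eventually.of_forall (hYNbd N))
  have key : ∀ N, ∫ ω, YN N ω * g ω ∂μ ≤ c * ∫ ω, Y ω ∂μ := by
    intro N
    have hpull := condExp_mul_of_stronglyMeasurable_left (μ := μ) (hYNm N)
      (by exact hYNg_int N) hgint
    have h1 : ∫ ω, YN N ω * g ω ∂μ = ∫ ω, YN N ω * (μ[g|m]) ω ∂μ := by
      rw [← integral_condExp hm (f := fun ω => YN N ω * g ω)]
      exact integral_congr_ae (by exact hpull)
    rw [h1]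
    have hint1 : Integrable (fun ω => YN N ω * (μ[g|m]) ω) μ :=
      integrable_condExp.bdd_mul ((hYNm N).mono hm).aestronglyMeasurable (Filter.Eventually.of_forall (hYNbd N))
    have h2 : ∫ ω, YN N ω * (μ[g|m]) ω ∂μ ≤ ∫ ω, c * YN N ω ∂μ := by
      have hintYN : Integrable (YN N) μ := by
        refine hYint.mono ((hYNm N).mono hm).aestronglyMeasurable ?_
        refine Filter.Eventually.of_forall fun ω => ?_
        rw [Real.norm_eq_abs, Real.norm_eq_abs, abs_of_nonneg (hYNnn N ω),
          abs_of_nonneg (hYnn ω)]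
        exact min_le_left _ _
      refine integral_mono_ae hint1 (hintYN.const_mul c) ?_
      filter_upwards [hcond] with ω hω
      calc YN N ω * (μ[g|m]) ω ≤ YN N ω * c :=
            mul_le_mul_of_nonneg_left hω (hYNnn N ω)
        _ = c * YN N ω := mul_comm _ _
    refine h2.trans ?_
    rw [integral_const_mul]
    refine mul_le_mul_of_nonneg_left ?_ hc
    refine integral_mono ?_ hYint fun ω => min_le_left _ _
    refine hYint.mono ((hYNm N).mono hm).aestronglyMeasurable ?_
    refine Filter.Eventually.of_forall fun ω => ?_
    rw [Real.norm_eq_abs, Real.norm_eq_abs, abs_of_nonneg (hYNnn N ω),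
      abs_of_nonneg (hYnn ω)]
    exact min_le_left _ _
  -- lintegral bound
  have hlean : ∀ N, ∫⁻ ω, ENNReal.ofReal (YN N ω * g ω) ∂μ
      ≤ ENNReal.ofReal (c * ∫ ω, Y ω ∂μ) := by
    intro N
    rw [← ofReal_integral_eq_lintegral_ofReal (hYNg_int N)
      (Filter.Eventually.of_forall fun ω => mul_nonneg (hYNnn N ω) (hgnn ω))]
    exact ENNReal.ofReal_le_ofReal (key N)
  have hsup : ∫⁻ ω, ENNReal.ofReal (Y ω * g ω) ∂μ
      ≤ ENNReal.ofReal (c * ∫ ω, Y ω ∂μ) := by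
    have hmono : ∀ ω, Monotone fun N : ℕ => ENNReal.ofReal (YN N ω * g ω) := by
      intro ω N M hNM
      exact ENNReal.ofReal_le_ofReal (mul_le_mul_of_nonneg_right
        (min_le_min le_rfl (Nat.cast_le.mpr hNM)) (hgnn ω))
    have hlim : ∀ ω, (⨆ N : ℕ, ENNReal.ofReal (YN N ω * g ω))
        = ENNReal.ofReal (Y ω * g ω) := by
      intro ω
      have hev : ∀ N : ℕ, Y ω ≤ N → ENNReal.ofReal (YN N ω * g ω)
          = ENNReal.ofReal (Y ω * g ω) := by
        intro N hN; rw [hYN]; simp [min_eq_left hN]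
      obtain ⟨N0, hN0⟩ := exists_nat_ge (Y ω)
      apply le_antisymm
      · refine iSup_le fun N => ENNReal.ofReal_le_ofReal
          (mul_le_mul_of_nonneg_right (min_le_left _ _) (hgnn ω))
      · rw [← hev N0 hN0]
        exact le_iSup (fun N => ENNReal.ofReal (YN N ω * g ω)) N0
    calc ∫⁻ ω, ENNReal.ofReal (Y ω * g ω) ∂μ
        = ∫⁻ ω, ⨆ N : ℕ, ENNReal.ofReal (YN N ω * g ω) ∂μ := by
          refine lintegral_congr fun ω => (hlim ω).symm
      _ = ⨆ N : ℕ, ∫⁻ ω, ENNReal.ofReal (YN N ω * g ω) ∂μ := by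
          refine lintegral_iSup' (fun N => ?_) (Filter.Eventually.of_forall hmono)
          exact (Measurable.aemeasurable (μ := μ)
            (((hYm0.min measurable_const).mul hg).ennreal_ofReal))
      _ ≤ ENNReal.ofReal (c * ∫ ω, Y ω ∂μ) := iSup_le hlean
  have hintYg : Integrable (fun ω => Y ω * g ω) μ := by
    refine ⟨Measurable.aestronglyMeasurable (μ := μ) (Measurable.mul (m := m0) hYm0 hg), ?_⟩
    rw [hasFiniteIntegral_iff_ofReal
      (Filter.Eventually.of_forall fun ω => mul_nonneg (hYnn ω) (hgnn ω))]
    exact lt_of_le_of_lt hsup ENNReal.ofReal_lt_top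
  refine ⟨hintYg, ?_⟩
  rw [integral_eq_lintegral_of_nonneg_ae
    (Filter.Eventually.of_forall fun ω => mul_nonneg (hYnn ω) (hgnn ω))
    (Measurable.aestronglyMeasurable (μ := μ) (Measurable.mul (m := m0) hYm0 hg))]
  calc (∫⁻ ω, ENNReal.ofReal (Y ω * g ω) ∂μ).toReal
      ≤ (ENNReal.ofReal (c * ∫ ω, Y ω ∂μ)).toReal :=
        ENNReal.toReal_mono ENNReal.ofReal_ne_top hsup
    _ = c * ∫ ω, Y ω ∂μ := ENNReal.toReal_ofReal (mul_nonneg hc hYInn)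

lemma pullout_zero [IsProbabilityMeasure μ] {m : MeasurableSpace Ω} (hm : m ≤ m0)
    {Y f : Ω → ℝ} (hY : StronglyMeasurable[m] Y) (hYnn : ∀ ω, 0 ≤ Y ω)
    (hYint : Integrable Y μ) (hf : Measurable[m0] f) (hfint : Integrable f μ)
    (hYfabs : Integrable (fun ω => Y ω * |f ω|) μ)
    (hcond : μ[f|m] =ᵐ[μ] 0) :
    Integrable (fun ω => Y ω * f ω) μ ∧ ∫ ω, Y ω * f ω ∂μ = 0 := by
  haveI : SigmaFinite (μ.trim hm) := by infer_instance
  have hYm0 : Measurable[m0] Y := (hY.mono hm).measurable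
  set YN : ℕ → Ω → ℝ := fun N ω => min (Y ω) N with hYN
  have hYNm : ∀ N, StronglyMeasurable[m] (YN N) :=
    fun N => hY.inf stronglyMeasurable_const
  have hYNnn : ∀ N ω, 0 ≤ YN N ω := fun N ω => le_min (hYnn ω) (Nat.cast_nonneg N)
  have hYNbd : ∀ N ω, ‖YN N ω‖ ≤ (N : ℝ) := by
    intro N ω
    rw [Real.norm_eq_abs, abs_of_nonneg (hYNnn N ω)]
    exact min_le_right _ _
  have hYNf_int : ∀ N, Integrable (fun ω => YN N ω * f ω) μ := by
    intro N
    exact hfint.bdd_mul ((hYNm N).mono hm).aestronglyMeasurable (Filter.Eventually.of_forall (hYNbd N))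
  have key : ∀ N, ∫ ω, YN N ω * f ω ∂μ = 0 := by
    intro N
    have hpull := condExp_mul_of_stronglyMeasurable_left (μ := μ) (hYNm N)
      (by exact hYNf_int N) hfint
    have h1 : ∫ ω, YN N ω * f ω ∂μ = ∫ ω, YN N ω * (μ[f|m]) ω ∂μ := by
      rw [← integral_condExp hm (f := fun ω => YN N ω * f ω)]
      exact integral_congr_ae (by exact hpull)
    rw [h1]
    have : ∀ᵐ ω ∂μ, YN N ω * (μ[f|m]) ω = 0 := by
      filter_upwards [hcond] with ω hω
      simp [hω]
    rw [integral_congr_ae this, integral_zero]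
  have hintYf : Integrable (fun ω => Y ω * f ω) μ := by
    refine hYfabs.mono' (Measurable.aestronglyMeasurable (μ := μ)
      (Measurable.mul (m := m0) hYm0 hf)) ?_
    refine Filter.Eventually.of_forall fun ω => ?_
    rw [Real.norm_eq_abs, abs_mul, abs_of_nonneg (hYnn ω)]
  have htend : Filter.Tendsto (fun N => ∫ ω, YN N ω * f ω ∂μ)
      Filter.atTop (nhds (∫ ω, Y ω * f ω ∂μ)) := by
    refine tendsto_integral_of_dominated_convergence (fun ω => Y ω * |f ω|)
      (fun N => Measurable.aestronglyMeasurable (μ := μ)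
        (Measurable.mul (m := m0) (hYm0.min measurable_const) hf))
      hYfabs (fun N => ?_) ?_
    · refine Filter.Eventually.of_forall fun ω => ?_
      rw [Real.norm_eq_abs, abs_mul, abs_of_nonneg (hYNnn N ω)]
      exact mul_le_mul_of_nonneg_right (min_le_left _ _) (abs_nonneg _)
    · refine Filter.Eventually.of_forall fun ω => ?_
      obtain ⟨N0, hN0⟩ := exists_nat_ge (Y ω)
      refine Filter.Tendsto.congr' ?_ tendsto_const_nhds
      filter_upwards [Filter.eventually_ge_atTop N0] with N hN
      have : Y ω ≤ (N : ℝ) := hN0.trans (Nat.cast_le.mpr hN)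
      simp [hYN, min_eq_left this]
  refine ⟨hintYf, ?_⟩
  have := Filter.Tendsto.congr' (Filter.Eventually.of_forall key) htend
  exact tendsto_nhds_unique this tendsto_const_nhds

lemma exp_sub_eq_tsum (z : ℝ) :
    rexp z - 1 - z = ∑' k : ℕ, z ^ (k + 2) / (Nat.factorial (k + 2)) := by
  have hsum : ∀ w : ℝ, Summable (fun k : ℕ => w ^ k / (Nat.factorial k)) :=
    fun w => Real.summable_pow_div_factorial w
  have hexp : rexp z = ∑' k : ℕ, z ^ k / (Nat.factorial k) := by
    rw [Real.exp_eq_exp_ℝ, NormedSpace.exp_eq_tsum_div]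
  have h1 := Summable.tsum_eq_zero_add (hsum z)
  have h2 := Summable.tsum_eq_zero_add ((summable_nat_add_iff 1).mpr (hsum z))
  rw [hexp, h1, h2]
  simp [Nat.factorial]
  try ring_nf

lemma exp_le_aux {l x : ℝ} (hl : 0 ≤ l) :
    rexp (l * x) ≤ 1 + l * x + (rexp (l * |x|) - 1 - l * |x|) := by
  have h1 := exp_sub_eq_tsum (l * x)
  have h2 := exp_sub_eq_tsum (l * |x|)
  have hle : rexp (l * x) - 1 - l * x ≤ rexp (l * |x|) - 1 - l * |x| := by
    rw [h1, h2]
    refine Summable.tsum_le_tsum (fun k => ?_) ?_ ?_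
    · have hfac : (0:ℝ) < (Nat.factorial (k + 2) : ℝ) := by
        exact_mod_cast Nat.factorial_pos (k + 2)
      refine div_le_div_of_nonneg_right ?_ hfac.le
      calc (l * x) ^ (k + 2) ≤ |(l * x) ^ (k + 2)| := le_abs_self _
        _ = (l * |x|) ^ (k + 2) := by
            rw [abs_pow, abs_mul, abs_of_nonneg hl]
    · exact (summable_nat_add_iff (f := fun k : ℕ => (l * x) ^ k / (Nat.factorial k)) 2).mpr
        (Real.summable_pow_div_factorial _)
    · exact (summable_nat_add_iff (f := fun k : ℕ => (l * |x|) ^ k / (Nat.factorial k)) 2).mpr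
        (Real.summable_pow_div_factorial _)
  linarith

lemma aesm {μ : Measure Ω} {f : Ω → ℝ} (hf : Measurable[m0] f) :
    AEStronglyMeasurable f μ :=
  hf.aestronglyMeasurable

lemma step [IsProbabilityMeasure μ] {m : MeasurableSpace Ω} (hm : m ≤ m0)
    {Y Z : Ω → ℝ} (hY : StronglyMeasurable[m] Y) (hYnn : ∀ ω, 0 ≤ Y ω)
    (hYint : Integrable Y μ)
    (hZ : Measurable[m0] Z) (hZint : ∀ k : ℕ, Integrable (fun ω => |Z ω| ^ k) μ)
    {σ b l : ℝ} (hσ : 0 < σ) (hb : 0 < b) (hl : 0 < l) (hlb : l * b < 1)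
    (hcent : μ[Z|m] =ᵐ[μ] 0)
    (hvar : ∀ᵐ ω ∂μ, (μ[fun ω' => (Z ω') ^ 2 | m]) ω ≤ σ ^ 2)
    (hmom : ∀ k : ℕ, 3 ≤ k → ∀ᵐ ω ∂μ, (μ[fun ω' => |Z ω'| ^ k | m]) ω ≤
        (1 / 2) * (Nat.factorial k) * σ ^ 2 * b ^ (k - 2)) :
    Integrable (fun ω => Y ω * rexp (l * Z ω)) μ ∧
      ∫ ω, Y ω * rexp (l * Z ω) ∂μ ≤
        (∫ ω, Y ω ∂μ) * rexp (l ^ 2 * σ ^ 2 / (2 * (1 - l * b))) := by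
  letI mI : MeasurableSpace Ω := m0
  have hYm0 : Measurable[m0] Y := (hY.mono hm).measurable
  have hZabs : Measurable[m0] (fun ω => |Z ω|) := hZ.abs
  have hZabspow : ∀ k : ℕ, Measurable[m0] (fun ω => |Z ω| ^ k) :=
    fun k => hZabs.pow_const k
  set I := ∫ ω, Y ω ∂μ with hI
  have hInn : 0 ≤ I := integral_nonneg hYnn
  have hq0 : (0:ℝ) ≤ l * b := by positivity
  have hq1 : 0 < 1 - l * b := by linarith
  -- moment bounds
  have hA : ∀ k : ℕ, 2 ≤ k → Integrable (fun ω => Y ω * |Z ω| ^ k) μ ∧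
      ∫ ω, Y ω * |Z ω| ^ k ∂μ ≤ ((Nat.factorial k) * σ ^ 2 * b ^ (k - 2) / 2) * I := by
    intro k hk
    refine pullout_le hm hY hYnn hYint (hZabspow k)
      (fun ω => by positivity) (hZint k) ?_
    rcases eq_or_lt_of_le hk with hk2 | hk3
    · subst hk2
      have hcongr : (fun ω' => |Z ω'| ^ 2) =ᵐ[μ] (fun ω' => (Z ω') ^ 2) :=
        Filter.Eventually.of_forall fun ω => sq_abs (Z ω)
      filter_upwards [hvar, condExp_congr_ae (m := m) hcongr] with ω h1 h2
      rw [h2]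
      calc (μ[fun ω' => Z ω' ^ 2|m]) ω ≤ σ ^ 2 := h1
        _ = (Nat.factorial 2) * σ ^ 2 * b ^ (2 - 2) / 2 := by norm_num [Nat.factorial]
    · have h3 : 3 ≤ k := hk3
      filter_upwards [hmom k h3] with ω h1
      calc (μ[fun ω' => |Z ω'| ^ k|m]) ω ≤ (1 / 2) * (Nat.factorial k) * σ ^ 2 * b ^ (k - 2) := h1
        _ = (Nat.factorial k) * σ ^ 2 * b ^ (k - 2) / 2 := by ring
  -- Z integrable, Y * Z has zero integral
  have hZint1 : Integrable Z μ := by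
    refine (hZint 1).mono' (aesm hZ) ?_
    exact Filter.Eventually.of_forall fun ω => by simp
  have hYabsZ : Integrable (fun ω => Y ω * |Z ω|) μ := by
    refine Integrable.mono' (g := fun ω => (Y ω + Y ω * |Z ω| ^ 2) / 2)
      ((hYint.add (hA 2 le_rfl).1).div_const 2)
      (aesm (Measurable.mul (m := m0) hYm0 hZabs)) ?_
    refine Filter.Eventually.of_forall fun ω => ?_
    rw [Real.norm_eq_abs, abs_mul, abs_of_nonneg (hYnn ω), abs_abs]
    have h1 : |Z ω| ≤ (1 + |Z ω| ^ 2) / 2 := by nlinarith [sq_nonneg (|Z ω| - 1)]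
    have := mul_le_mul_of_nonneg_left h1 (hYnn ω)
    nlinarith [hYnn ω]
  have hzero := pullout_zero hm hY hYnn hYint hZ hZint1 hYabsZ hcent
  -- the G term
  set G : Ω → ℝ := fun ω => rexp (l * |Z ω|) - 1 - l * |Z ω| with hGdef
  have hGnn : ∀ ω, 0 ≤ G ω := by
    intro ω
    have := add_one_le_exp (l * |Z ω|)
    simp only [hGdef]
    linarith
  have hlZ : Measurable[m0] (fun ω => l * |Z ω|) := hZabs.const_mul l
  have hGmeas : Measurable[m0] G := by
    have h1 : Measurable[m0] (fun ω => rexp (l * |Z ω|)) := Real.measurable_exp.comp hlZ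
    exact (h1.sub measurable_const).sub hlZ
  set q := l * b with hq
  set r := l ^ 2 * σ ^ 2 / 2 * I with hr
  have hrnn : 0 ≤ r := by positivity
  have hsumw : ∀ w : ℝ, 0 ≤ w → Summable (fun k : ℕ => w ^ (k + 2) / (Nat.factorial (k + 2))) :=
    fun w _ => (summable_nat_add_iff (f := fun k : ℕ => w ^ k / (Nat.factorial k)) 2).mpr
      (Real.summable_pow_div_factorial w)
  -- lintegral bound for Y * G
  have hterm : ∀ k : ℕ, ∫⁻ ω, ENNReal.ofReal (Y ω * ((l * |Z ω|) ^ (k + 2) /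
      (Nat.factorial (k + 2)))) ∂μ ≤ ENNReal.ofReal (r * q ^ k) := by
    intro k
    have hfacpos : (0:ℝ) < (Nat.factorial (k + 2) : ℝ) := by
      exact_mod_cast Nat.factorial_pos (k + 2)
    have hconst : (0:ℝ) ≤ l ^ (k + 2) / (Nat.factorial (k + 2)) := by positivity
    have heq : ∀ ω, Y ω * ((l * |Z ω|) ^ (k + 2) / (Nat.factorial (k + 2)))
        = (l ^ (k + 2) / (Nat.factorial (k + 2))) * (Y ω * |Z ω| ^ (k + 2)) := by
      intro ω; rw [mul_pow]; ring
    calc ∫⁻ ω, ENNReal.ofReal (Y ω * ((l * |Z ω|) ^ (k + 2) / (Nat.factorial (k + 2)))) ∂μ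
        = ∫⁻ ω, ENNReal.ofReal (l ^ (k + 2) / (Nat.factorial (k + 2)))
            * ENNReal.ofReal (Y ω * |Z ω| ^ (k + 2)) ∂μ := by
          refine lintegral_congr fun ω => ?_
          rw [heq ω, ENNReal.ofReal_mul hconst]
      _ = ENNReal.ofReal (l ^ (k + 2) / (Nat.factorial (k + 2)))
            * ∫⁻ ω, ENNReal.ofReal (Y ω * |Z ω| ^ (k + 2)) ∂μ := by
          rw [lintegral_const_mul]
          exact (Measurable.mul (m := m0) hYm0 (hZabspow _)).ennreal_ofReal
      _ ≤ ENNReal.ofReal (l ^ (k + 2) / (Nat.factorial (k + 2)))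
            * ENNReal.ofReal (((Nat.factorial (k + 2)) * σ ^ 2 * b ^ k / 2) * I) := by
          refine mul_le_mul_right ?_ _
          rw [← ofReal_integral_eq_lintegral_ofReal (hA (k + 2) (by omega)).1
            (Filter.Eventually.of_forall fun ω => mul_nonneg (hYnn ω) (by positivity))]
          refine ENNReal.ofReal_le_ofReal ?_
          have := (hA (k + 2) (by omega)).2
          simpa using this
      _ = ENNReal.ofReal (r * q ^ k) := by
          rw [← ENNReal.ofReal_mul hconst]
          congr 1
          field_simp
          ring
  have hYGof : ∀ ω, ENNReal.ofReal (Y ω * G ω)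
      = ∑' k : ℕ, ENNReal.ofReal (Y ω * ((l * |Z ω|) ^ (k + 2) / (Nat.factorial (k + 2)))) := by
    intro ω
    have h1 : G ω = ∑' k : ℕ, (l * |Z ω|) ^ (k + 2) / (Nat.factorial (k + 2)) :=
      exp_sub_eq_tsum (l * |Z ω|)
    have h2 : Y ω * G ω = ∑' k : ℕ, Y ω * ((l * |Z ω|) ^ (k + 2) / (Nat.factorial (k + 2))) := by
      rw [h1, tsum_mul_left]
    rw [h2]
    refine ENNReal.ofReal_tsum_of_nonneg (fun k => mul_nonneg (hYnn ω) (by positivity)) ?_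
    exact (hsumw (l * |Z ω|) (by positivity)).mul_left (Y ω)
  have hgeom : Summable (fun k : ℕ => r * q ^ k) :=
    (summable_geometric_of_lt_one hq0 (by linarith)).mul_left r
  have hsup : ∫⁻ ω, ENNReal.ofReal (Y ω * G ω) ∂μ ≤ ENNReal.ofReal (r / (1 - q)) := by
    calc ∫⁻ ω, ENNReal.ofReal (Y ω * G ω) ∂μ
        = ∑' k : ℕ, ∫⁻ ω, ENNReal.ofReal (Y ω * ((l * |Z ω|) ^ (k + 2) /
            (Nat.factorial (k + 2)))) ∂μ := by
          rw [lintegral_congr hYGof]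
          refine lintegral_tsum fun k => ?_
          have hme : Measurable[m0] (fun ω => Y ω * ((l * |Z ω|) ^ (k + 2) /
              (Nat.factorial (k + 2)))) :=
            Measurable.mul (m := m0) hYm0 ((hlZ.pow_const _).div_const _)
          exact hme.ennreal_ofReal.aemeasurable
      _ ≤ ∑' k : ℕ, ENNReal.ofReal (r * q ^ k) := ENNReal.tsum_le_tsum hterm
      _ = ENNReal.ofReal (∑' k : ℕ, r * q ^ k) := by
          rw [ENNReal.ofReal_tsum_of_nonneg (fun k => by positivity) hgeom]
      _ = ENNReal.ofReal (r / (1 - q)) := by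
          rw [tsum_mul_left, tsum_geometric_of_lt_one hq0 (by linarith), div_eq_mul_inv]
  have hYGint : Integrable (fun ω => Y ω * G ω) μ := by
    refine ⟨aesm (Measurable.mul (m := m0) hYm0 hGmeas), ?_⟩
    rw [hasFiniteIntegral_iff_ofReal
      (Filter.Eventually.of_forall fun ω => mul_nonneg (hYnn ω) (hGnn ω))]
    exact lt_of_le_of_lt hsup ENNReal.ofReal_lt_top
  have hYGle : ∫ ω, Y ω * G ω ∂μ ≤ r / (1 - q) := by
    rw [integral_eq_lintegral_of_nonneg_ae
      (Filter.Eventually.of_forall fun ω => mul_nonneg (hYnn ω) (hGnn ω))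
      (aesm (Measurable.mul (m := m0) hYm0 hGmeas))]
    calc (∫⁻ ω, ENNReal.ofReal (Y ω * G ω) ∂μ).toReal
        ≤ (ENNReal.ofReal (r / (1 - q))).toReal :=
          ENNReal.toReal_mono ENNReal.ofReal_ne_top hsup
      _ = r / (1 - q) := ENNReal.toReal_ofReal (by positivity)
  -- combine
  have hpt : ∀ ω, Y ω * rexp (l * Z ω) ≤ Y ω + l * (Y ω * Z ω) + Y ω * G ω := by
    intro ω
    have h1 := exp_le_aux (x := Z ω) hl.le
    have h2 := mul_le_mul_of_nonneg_left h1 (hYnn ω)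
    calc Y ω * rexp (l * Z ω)
        ≤ Y ω * (1 + l * Z ω + (rexp (l * |Z ω|) - 1 - l * |Z ω|)) := h2
      _ = Y ω + l * (Y ω * Z ω) + Y ω * G ω := by simp only [hGdef]; ring
  have hHint : Integrable (fun ω => Y ω + l * (Y ω * Z ω) + Y ω * G ω) μ :=
    (hYint.add (hzero.1.const_mul l)).add hYGint
  have hEint : Integrable (fun ω => Y ω * rexp (l * Z ω)) μ := by
    have hm1 : Measurable[m0] (fun ω => Y ω * rexp (l * Z ω)) :=
      Measurable.mul (m := m0) hYm0 (Real.measurable_exp.comp (hZ.const_mul l))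
    refine hHint.mono' (aesm hm1) ?_
    refine Filter.Eventually.of_forall fun ω => ?_
    rw [Real.norm_eq_abs, abs_of_nonneg (mul_nonneg (hYnn ω) (Real.exp_nonneg _))]
    exact hpt ω
  refine ⟨hEint, ?_⟩
  have h3 : ∫ ω, Y ω * rexp (l * Z ω) ∂μ
      ≤ ∫ ω, (Y ω + l * (Y ω * Z ω) + Y ω * G ω) ∂μ :=
    integral_mono hEint hHint hpt
  have h4 : ∫ ω, (Y ω + l * (Y ω * Z ω) + Y ω * G ω) ∂μ
      = I + l * ∫ ω, Y ω * Z ω ∂μ + ∫ ω, Y ω * G ω ∂μ := by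
    have hi2 : Integrable (fun ω => l * (Y ω * Z ω)) μ := hzero.1.const_mul l
    have hi12 : Integrable (fun ω => Y ω + l * (Y ω * Z ω)) μ := hYint.add hi2
    rw [integral_add hi12 hYGint, integral_add hYint hi2, integral_const_mul]
  have h5 : r / (1 - q) = (l ^ 2 * σ ^ 2 / (2 * (1 - l * b))) * I := by
    rw [hr, hq]
    field_simp
  have h6 : I + (l ^ 2 * σ ^ 2 / (2 * (1 - l * b))) * I
      ≤ I * rexp (l ^ 2 * σ ^ 2 / (2 * (1 - l * b))) := by
    set C := l ^ 2 * σ ^ 2 / (2 * (1 - l * b)) with hC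
    have h7 : 1 + C ≤ rexp C := by
      have := add_one_le_exp C
      linarith
    calc I + C * I = I * (1 + C) := by ring
      _ ≤ I * rexp C := mul_le_mul_of_nonneg_left h7 hInn
  rw [hzero.2] at h4
  calc ∫ ω, Y ω * rexp (l * Z ω) ∂μ
      ≤ I + l * 0 + ∫ ω, Y ω * G ω ∂μ := h3.trans_eq h4
    _ ≤ I + (l ^ 2 * σ ^ 2 / (2 * (1 - l * b))) * I := by
        rw [mul_zero, add_zero]
        linarith [hYGle.trans_eq h5]
    _ ≤ I * rexp (l ^ 2 * σ ^ 2 / (2 * (1 - l * b))) := h6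

lemma mgf_bound [IsProbabilityMeasure μ] (n : ℕ) (X : ℕ → Ω → ℝ)
    (hmeas : ∀ j, Measurable[m0] (X j))
    (hint : ∀ j k : ℕ, Integrable (fun ω => |X j ω| ^ k) μ)
    (past : ℕ → MeasurableSpace Ω) (hmle : ∀ j, past j ≤ m0)
    (hadapt : ∀ j, StronglyMeasurable[past j] (fun ω => ∑ i ∈ Finset.range j, X i ω))
    {σ b l : ℝ} (hσ : 0 < σ) (hb : 0 < b) (hl : 0 < l) (hlb : l * b < 1)
    (hcentered : ∀ j < n, μ[X j | past j] =ᵐ[μ] 0)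
    (hvar : ∀ j < n, ∀ᵐ ω ∂μ, (μ[fun ω' => (X j ω') ^ 2 | past j]) ω ≤ σ ^ 2)
    (hmom : ∀ j < n, ∀ k : ℕ, 3 ≤ k → ∀ᵐ ω ∂μ, (μ[fun ω' => |X j ω'| ^ k | past j]) ω ≤
        (1 / 2) * (Nat.factorial k) * σ ^ 2 * b ^ (k - 2)) :
    ∀ j ≤ n, Integrable (fun ω => rexp (l * ∑ i ∈ Finset.range j, X i ω)) μ ∧
      ∫ ω, rexp (l * ∑ i ∈ Finset.range j, X i ω) ∂μ ≤
        rexp ((j : ℝ) * (l ^ 2 * σ ^ 2 / (2 * (1 - l * b)))) := by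
  intro j
  induction j with
  | zero =>
    intro _
    constructor
    · simpa using integrable_const (μ := μ) (1 : ℝ)
    · simp
  | succ j ih =>
    intro hj
    have hjn : j < n := hj
    obtain ⟨hYint, hYle⟩ := ih hjn.le
    set Y := fun ω => rexp (l * ∑ i ∈ Finset.range j, X i ω) with hYdef
    have hYsm : StronglyMeasurable[past j] Y :=
      Real.continuous_exp.comp_stronglyMeasurable
        (stronglyMeasurable_const.mul (hadapt j))
    have hYnn : ∀ ω, 0 ≤ Y ω := fun ω => Real.exp_nonneg _
    have hstep := step (hmle j) hYsm hYnn hYint (hmeas j) (hint j) hσ hb hl hlb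
      (hcentered j hjn) (hvar j hjn) (hmom j hjn)
    have hfun : ∀ ω, Y ω * rexp (l * X j ω)
        = rexp (l * ∑ i ∈ Finset.range (j + 1), X i ω) := by
      intro ω
      rw [hYdef, Finset.sum_range_succ, mul_add, Real.exp_add]
    constructor
    · exact hstep.1.congr (Filter.Eventually.of_forall hfun)
    · have h1 : ∫ ω, rexp (l * ∑ i ∈ Finset.range (j + 1), X i ω) ∂μ
          = ∫ ω, Y ω * rexp (l * X j ω) ∂μ :=
        integral_congr_ae (Filter.Eventually.of_forall fun ω => (hfun ω).symm)
      rw [h1]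
      set C := l ^ 2 * σ ^ 2 / (2 * (1 - l * b)) with hC
      calc ∫ ω, Y ω * rexp (l * X j ω) ∂μ ≤ (∫ ω, Y ω ∂μ) * rexp C := hstep.2
        _ ≤ rexp ((j : ℝ) * C) * rexp C := by
            refine mul_le_mul_of_nonneg_right hYle (Real.exp_nonneg _)
        _ = rexp (((j : ℕ) + 1 : ℝ) * C) := by
            rw [← Real.exp_add]
            congr 1
            ring
        _ = rexp (((j + 1 : ℕ) : ℝ) * C) := by push_cast; ring_nf

lemma onesided [IsProbabilityMeasure μ] (n : ℕ) (hn : 1 ≤ n) (X : ℕ → Ω → ℝ)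
    (hmeas : ∀ j, Measurable[m0] (X j))
    (hint : ∀ j k : ℕ, Integrable (fun ω => |X j ω| ^ k) μ)
    (past : ℕ → MeasurableSpace Ω) (hmle : ∀ j, past j ≤ m0)
    (hadapt : ∀ j, StronglyMeasurable[past j] (fun ω => ∑ i ∈ Finset.range j, X i ω))
    {σ b : ℝ} (hσ : 0 < σ) (hb : 0 < b)
    (hcentered : ∀ j < n, μ[X j | past j] =ᵐ[μ] 0)
    (hvar : ∀ j < n, ∀ᵐ ω ∂μ, (μ[fun ω' => (X j ω') ^ 2 | past j]) ω ≤ σ ^ 2)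
    (hmom : ∀ j < n, ∀ k : ℕ, 3 ≤ k → ∀ᵐ ω ∂μ, (μ[fun ω' => |X j ω'| ^ k | past j]) ω ≤
        (1 / 2) * (Nat.factorial k) * σ ^ 2 * b ^ (k - 2)) :
    ∀ t : ℝ, 0 < t → (μ {ω | t ≤ ∑ j ∈ Finset.range n, X j ω}).toReal ≤
      rexp (-t ^ 2 / (2 * ((n : ℝ) * σ ^ 2 + b * t))) := by
  intro t ht
  set D := (n : ℝ) * σ ^ 2 + b * t with hD
  have hn1 : (1 : ℝ) ≤ (n : ℝ) := by exact_mod_cast hn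
  have hnσ : 0 < (n : ℝ) * σ ^ 2 := by nlinarith [sq_nonneg σ, hσ]
  have hDpos : 0 < D := by positivity
  set l := t / D with hl
  have hlpos : 0 < l := by positivity
  have hlb : l * b < 1 := by
    rw [hl, div_mul_eq_mul_div, div_lt_one hDpos]
    nlinarith
  have hmgf := (mgf_bound n X hmeas hint past hmle hadapt hσ hb hlpos hlb
    hcentered hvar hmom n le_rfl)
  have hchern := ProbabilityTheory.measure_ge_le_exp_mul_mgf (μ := μ)
    (X := fun ω => ∑ j ∈ Finset.range n, X j ω) (t := l) t hlpos.le hmgf.1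
  have hmgfle : ProbabilityTheory.mgf (fun ω => ∑ j ∈ Finset.range n, X j ω) μ l
      ≤ rexp ((n : ℝ) * (l ^ 2 * σ ^ 2 / (2 * (1 - l * b)))) := hmgf.2
  have h1lb : 1 - l * b = (n : ℝ) * σ ^ 2 / D := by
    rw [hl]
    field_simp
    rw [hD]
    ring
  have hexp_eq : -l * t + (n : ℝ) * (l ^ 2 * σ ^ 2 / (2 * (1 - l * b)))
      = -t ^ 2 / (2 * D) := by
    rw [h1lb, hl]
    field_simp
    ring
  calc (μ {ω | t ≤ ∑ j ∈ Finset.range n, X j ω}).toReal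
      ≤ rexp (-l * t) * ProbabilityTheory.mgf (fun ω => ∑ j ∈ Finset.range n, X j ω) μ l :=
        hchern
    _ ≤ rexp (-l * t) * rexp ((n : ℝ) * (l ^ 2 * σ ^ 2 / (2 * (1 - l * b)))) :=
        mul_le_mul_of_nonneg_left hmgfle (Real.exp_nonneg _)
    _ = rexp (-t ^ 2 / (2 * D)) := by rw [← Real.exp_add, hexp_eq]

end MartBern

/-- Bernstein's inequality for martingale difference sequences (two-sided,
simplified version of Theorem 1.2A in de la Peña 1999). If
`E[X_j | X₁,…,X_{j−1}] = 0`, `E[X_j² | X₁,…,X_{j−1}] ≤ σ²` and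
`E[|X_j|^k | X₁,…,X_{j−1}] ≤ (1/2)k!σ²b^{k−2}` for all `k ≥ 3`, then for all
`t > 0`, `P(|∑_{j<n} X_j| ≥ t) ≤ 2exp(−t²/(2(nσ² + bt)))`. -/
theorem martingale_bernstein_inequality
    {Ω : Type*} [m0 : MeasurableSpace Ω] (μ : Measure Ω) [IsProbabilityMeasure μ]
    (n : ℕ) (X : ℕ → Ω → ℝ)
    (hmeas : ∀ j, Measurable (X j))
    (hint : ∀ j k : ℕ, Integrable (fun ω => |X j ω| ^ k) μ)
    (past : ℕ → MeasurableSpace Ω)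
    (hpast : ∀ j, past j =
      MeasurableSpace.comap (fun ω (i : Fin j) => X i ω) inferInstance)
    (σ b : ℝ) (hσ : 0 < σ) (hb : 0 < b)
    (hcentered : ∀ j < n, μ[X j | past j] =ᵐ[μ] 0)
    (hvar : ∀ j < n, ∀ᵐ ω ∂μ, (μ[fun ω' => (X j ω') ^ 2 | past j]) ω ≤ σ ^ 2)
    (hmom : ∀ j < n, ∀ k : ℕ, 3 ≤ k →
      ∀ᵐ ω ∂μ, (μ[fun ω' => |X j ω'| ^ k | past j]) ω ≤
        (1 / 2) * (Nat.factorial k) * σ ^ 2 * b ^ (k - 2)) :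
    ∀ t : ℝ, 0 < t →
      μ {ω | |∑ j ∈ Finset.range n, X j ω| ≥ t} ≤
        ENNReal.ofReal (2 * rexp (-t ^ 2 / (2 * ((n : ℝ) * σ ^ 2 + b * t)))) := by
  intro t ht
  rcases Nat.eq_zero_or_pos n with hn0 | hn
  · subst hn0
    have hempty : {ω | |∑ j ∈ Finset.range 0, X j ω| ≥ t} = (∅ : Set Ω) := by
      ext ω
      simp only [Finset.range_zero, Finset.sum_empty, abs_zero, ge_iff_le,
        Set.mem_setOf_eq, Set.mem_empty_iff_false, iff_false, not_le]
      exact ht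
    rw [hempty]
    simp
  · have hmle : ∀ j, past j ≤ m0 := by
      intro j
      rw [hpast j]
      exact Measurable.comap_le (measurable_pi_lambda _ fun i => hmeas i)
    have hadapt : ∀ j, StronglyMeasurable[past j]
        (fun ω => ∑ i ∈ Finset.range j, X i ω) := by
      intro j
      rw [hpast j]
      have hF : Measurable[MeasurableSpace.comap (fun ω (i : Fin j) => X i ω) inferInstance]
          (fun ω (i : Fin j) => X i ω) := Measurable.of_comap_le le_rfl
      have hsum : Measurable (fun v : Fin j → ℝ => ∑ i, v i) :=
        Finset.measurable_sum Finset.univ fun i _ => measurable_pi_apply i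
      have hcomp : Measurable[MeasurableSpace.comap (fun ω (i : Fin j) => X i ω) inferInstance]
          (fun ω => ∑ i : Fin j, X i ω) := hsum.comp hF
      have heq : (fun ω => ∑ i ∈ Finset.range j, X i ω)
          = fun ω => ∑ i : Fin j, X i ω := by
        funext ω
        exact (Fin.sum_univ_eq_sum_range (fun i => X i ω) j).symm
      rw [heq]
      exact hcomp.stronglyMeasurable
    have honeX := MartBern.onesided n hn X hmeas hint past hmle hadapt hσ hb
      hcentered hvar hmom t ht
    -- negated sequence
    have hadapt' : ∀ j, StronglyMeasurable[past j]
        (fun ω => ∑ i ∈ Finset.range j, -(X i ω)) := by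
      intro j
      have := (hadapt j).neg
      simp only [Finset.sum_neg_distrib]
      exact this
    have hcent' : ∀ j < n, μ[(fun ω => -(X j ω)) | past j] =ᵐ[μ] 0 := by
      intro j hj
      have h1 : μ[-(X j) | past j] =ᵐ[μ] -μ[X j | past j] := condExp_neg (X j) (past j)
      refine h1.trans ?_
      filter_upwards [hcentered j hj] with ω hω
      simp only [Pi.neg_apply, hω, Pi.zero_apply, neg_zero]
    have hvar' : ∀ j < n, ∀ᵐ ω ∂μ,
        (μ[fun ω' => (-(X j ω')) ^ 2 | past j]) ω ≤ σ ^ 2 := by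
      intro j hj
      simpa only [neg_sq] using hvar j hj
    have hmom' : ∀ j < n, ∀ k : ℕ, 3 ≤ k → ∀ᵐ ω ∂μ,
        (μ[fun ω' => |(-(X j ω'))| ^ k | past j]) ω ≤
          (1 / 2) * (Nat.factorial k) * σ ^ 2 * b ^ (k - 2) := by
      intro j hj k hk
      simpa only [abs_neg] using hmom j hj k hk
    have honeX' := MartBern.onesided n hn (fun j ω => -(X j ω))
      (fun j => (hmeas j).neg)
      (fun j k => by simpa only [abs_neg] using hint j k)
      past hmle hadapt' hσ hb hcent' hvar' hmom' t ht
    set e := rexp (-t ^ 2 / (2 * ((n : ℝ) * σ ^ 2 + b * t))) with he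
    have hb1 : μ {ω | t ≤ ∑ j ∈ Finset.range n, X j ω} ≤ ENNReal.ofReal e := by
      rw [← ENNReal.ofReal_toReal (measure_ne_top μ _)]
      exact ENNReal.ofReal_le_ofReal honeX
    have hb2 : μ {ω | t ≤ ∑ j ∈ Finset.range n, -(X j ω)} ≤ ENNReal.ofReal e := by
      rw [← ENNReal.ofReal_toReal (measure_ne_top μ _)]
      exact ENNReal.ofReal_le_ofReal honeX'
    have hsub : {ω | |∑ j ∈ Finset.range n, X j ω| ≥ t} ⊆
        {ω | t ≤ ∑ j ∈ Finset.range n, X j ω} ∪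
        {ω | t ≤ ∑ j ∈ Finset.range n, -(X j ω)} := by
      intro ω hω
      simp only [Set.mem_setOf_eq, ge_iff_le] at hω
      rcases le_abs.mp hω with h | h
      · exact Or.inl h
      · right
        simp only [Set.mem_setOf_eq, Finset.sum_neg_distrib]
        exact h
    calc μ {ω | |∑ j ∈ Finset.range n, X j ω| ≥ t}
        ≤ μ ({ω | t ≤ ∑ j ∈ Finset.range n, X j ω} ∪
            {ω | t ≤ ∑ j ∈ Finset.range n, -(X j ω)}) := measure_mono hsub
      _ ≤ μ {ω | t ≤ ∑ j ∈ Finset.range n, X j ω} +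
            μ {ω | t ≤ ∑ j ∈ Finset.range n, -(X j ω)} := measure_union_le _ _
      _ ≤ ENNReal.ofReal e + ENNReal.ofReal e := add_le_add hb1 hb2
      _ = ENNReal.ofReal (2 * e) := by
          rw [← ENNReal.ofReal_add (Real.exp_nonneg _) (Real.exp_nonneg _)]
          congr 1
          ring
end
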